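/- Let ξ and ξ' be quadratic functions on G (each with some associated bilinear function). If ξ(e^i) = ξ'(e^i) for all i and ξ(e^i + e^j) = ξ'(e^i + e^j) for all i, j, then ξ = ξ'. In other words, a quadratic function on G is completely determined by its values on the elements e^i and e^i + e^j. -/

import Mathlib

lemma decomp_aux {m : ℕ} {d : Fin m → ℕ} [∀ i, NeZero (d i)]
    (g : ∀ i, ZMod (d i)) : g = ∑ i, (g i).val • Pi.single i 1 := by
  funext j
  rw [Finset.sum_apply, Finset.sum_eq_single j]
  · simp [nsmul_eq_mul, ZMod.natCast_val]
  · intro i _ hij; simp [Pi.single_apply, hij]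
  · simp

lemma hom_eq_one {m : ℕ} {d : Fin m → ℕ} [∀ i, NeZero (d i)]
    (φ : (∀ i, ZMod (d i)) → ℂ) (h0 : ∀ g, φ g ≠ 0)
    (hmul : ∀ g h, φ (g + h) = φ g * φ h)
    (hgen : ∀ i, φ (Pi.single i 1) = 1) : ∀ g, φ g = 1 := by
  have h1 : φ 0 = 1 := by
    have h := hmul 0 0
    rw [add_zero] at h
    nth_rewrite 1 [← mul_one (φ 0)] at h
    exact (mul_left_cancel₀ (h0 0) h).symm
  have hn : ∀ (n : ℕ) (x), φ (n • x) = φ x ^ n := by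
    intro n x
    induction n with
    | zero => simpa using h1
    | succ k ih => rw [succ_nsmul, hmul, ih, pow_succ]
  have hsum : ∀ (s : Finset (Fin m)) (f : Fin m → ∀ i, ZMod (d i)),
      φ (∑ i ∈ s, f i) = ∏ i ∈ s, φ (f i) := by
    intro s f
    induction s using Finset.induction with
    | empty => simpa using h1
    | insert a s hij ih => rw [Finset.sum_insert hij, hmul,
        Finset.prod_insert hij, ih]
  intro g
  rw [decomp_aux g, hsum]
  simp only [hn, hgen, one_pow, Finset.prod_const_one]
/-- A function `B : G × G → ℂ` with nowhere-zero values is bilinear. -/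
def IsBilinear {m : ℕ} {d : Fin m → ℕ}
    (B : (∀ i, ZMod (d i)) × (∀ i, ZMod (d i)) → ℂ) : Prop :=
  (∀ p, B p ≠ 0) ∧
  (∀ g h x : ∀ i, ZMod (d i), B (g + h, x) = B (g, x) * B (h, x)) ∧
  (∀ x g h : ∀ i, ZMod (d i), B (x, g + h) = B (x, g) * B (x, h))

/-- A function `ξ : G → ℂ` with nowhere-zero values is quadratic if
`ξ(g+h) = ξ(g)ξ(h)B(g,h)` for some bilinear `B`. -/
def IsQuadratic {m : ℕ} {d : Fin m → ℕ} (ξ : (∀ i, ZMod (d i)) → ℂ) : Prop :=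
  (∀ g, ξ g ≠ 0) ∧
  ∃ B : (∀ i, ZMod (d i)) × (∀ i, ZMod (d i)) → ℂ, IsBilinear B ∧
    ∀ g h : ∀ i, ZMod (d i), ξ (g + h) = ξ g * ξ h * B (g, h)

/-- A quadratic function on `G` is completely determined by its values on the generators
`e^i = Pi.single i 1` and on the sums `e^i + e^j`. -/
theorem stmt_8 (m : ℕ) (hm : 0 < m) (d : Fin m → ℕ) [∀ i, NeZero (d i)]
    (ξ ξ' : (∀ i, ZMod (d i)) → ℂ) (hξ : IsQuadratic ξ) (hξ' : IsQuadratic ξ')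
    (he : ∀ i : Fin m, ξ (Pi.single i 1) = ξ' (Pi.single i 1))
    (hee : ∀ i j : Fin m,
      ξ (Pi.single i 1 + Pi.single j 1) = ξ' (Pi.single i 1 + Pi.single j 1)) :
    ξ = ξ' := by
  obtain ⟨hξ0, B, ⟨hB0, hBl, hBr⟩, hB⟩ := hξ
  obtain ⟨hξ'0, B', ⟨hB'0, hB'l, hB'r⟩, hB'⟩ := hξ'
  -- the ratio of the two bilinear forms
  set C : (∀ i, ZMod (d i)) × (∀ i, ZMod (d i)) → ℂ := fun p => B p / B' p with hC
  have hC0 : ∀ p, C p ≠ 0 := fun p => div_ne_zero (hB0 p) (hB'0 p)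
  have hCl : ∀ g h x : ∀ i, ZMod (d i), C (g + h, x) = C (g, x) * C (h, x) := by
    intro g h x
    simp only [hC, hBl, hB'l]
    field_simp
  have hCr : ∀ x g h : ∀ i, ZMod (d i), C (x, g + h) = C (x, g) * C (x, h) := by
    intro x g h
    simp only [hC, hBr, hB'r]
    field_simp
  -- C equals 1 on pairs of generators
  have hCgen : ∀ i j : Fin m, C (Pi.single i 1, Pi.single j 1) = 1 := by
    intro i j
    have h1 := hB (Pi.single i 1) (Pi.single j 1)
    have h2 := hB' (Pi.single i 1) (Pi.single j 1)
    rw [hee i j, he i, he j] at h1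
    rw [h2] at h1
    have h5 := mul_left_cancel₀ (mul_ne_zero (hξ'0 _) (hξ'0 _)) h1
    show B (Pi.single i 1, Pi.single j 1) / B' (Pi.single i 1, Pi.single j 1) = 1
    rw [← h5, div_self (hB'0 _)]
  -- hence C = 1 everywhere
  have hCone : ∀ x y : ∀ i, ZMod (d i), C (x, y) = 1 := by
    intro x y
    have hrow : ∀ i, C (Pi.single i 1, y) = 1 := by
      intro i
      exact hom_eq_one (fun z => C (Pi.single i 1, z)) (fun z => hC0 _)
        (fun g h => hCr _ g h) (fun j => hCgen i j) y
    exact hom_eq_one (fun z => C (z, y)) (fun z => hC0 _)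
      (fun g h => hCl g h y) hrow x
  -- the ratio of the two quadratic functions is a homomorphism
  have hφ : ∀ g, ξ g / ξ' g = 1 := by
    refine hom_eq_one (fun g => ξ g / ξ' g) (fun g => div_ne_zero (hξ0 g) (hξ'0 g))
      (fun g h => ?_) (fun i => by show ξ _ / ξ' _ = 1; rw [he i, div_self (hξ'0 _)])
    have h1 := hB g h
    have h2 := hB' g h
    have h3 := hCone g h
    have h4 : B (g, h) = B' (g, h) := by
      have h3' : B (g, h) / B' (g, h) = 1 := h3
      exact (div_eq_one_iff_eq (hB'0 _)).mp h3'
    show ξ (g + h) / ξ' (g + h) = (ξ g / ξ' g) * (ξ h / ξ' h)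
    rw [h1, h2, h4]
    field_simp
    rw [mul_comm (B' (g, h)) (ξ' g), mul_assoc (ξ' g), mul_comm (B' (g, h)) (ξ' h), ← mul_assoc]
    exact mul_div_mul_right _ _ (hB'0 (g, h))
  funext g
  exact (div_eq_one_iff_eq (hξ'0 g)).mp (hφ g)
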